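/- Let n, s, k be positive integers with k ≥ 2, s ≥ 1, and n + 1 − 2s − k ≥ 1, and let α be a real number with 0 ≤ α < 1. Then ρ_α(K_s ∨ (K_{n+1−2s−k} ∪ \overline{K_{s+k−1}})) > n − s − k. -/

import Mathlib

open scoped Classical

/-- The largest eigenvalue of a real square matrix. -/
noncomputable def maxEigenvalue {V : Type*} [Fintype V] (M : Matrix V V ℝ) : ℝ :=
  sSup {t : ℝ | Module.End.HasEigenvalue (Matrix.toLin' M) t}

/-- The `A_α`-matrix `α•D(G) + (1-α)•A(G)` of a graph. -/
noncomputable def AalphaMatrix {V : Type*} [Fintype V] (α : ℝ) (G : SimpleGraph V) :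
    Matrix V V ℝ :=
  α • Matrix.diagonal (fun v => (G.degree v : ℝ)) + (1 - α) • G.adjMatrix ℝ

/-- The `A_α`-spectral radius of a graph: the largest eigenvalue of its `A_α`-matrix. -/
noncomputable def rhoAlpha {V : Type*} [Fintype V] (α : ℝ) (G : SimpleGraph V) : ℝ :=
  maxEigenvalue (AalphaMatrix α G)

/-- The graph `K_s ∨ (K_{n+1-2s-k} ∪ (K_{s+k-1})ᶜ)` on `Fin n`: the first `s`
vertices form a clique joined to everything, the vertices with index in
`[s, n+1-s-k)` form a clique of size `n+1-2s-k`, and the remaining `s+k-1`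
vertices form an independent set. -/
def cliqueJoinGraph (n s k : ℕ) : SimpleGraph (Fin n) where
  Adj u v := u ≠ v ∧ ((u : ℕ) < s ∨ (v : ℕ) < s ∨
    ((u : ℕ) < n + 1 - s - k ∧ (v : ℕ) < n + 1 - s - k))
  symm := by
    constructor
    rintro u v ⟨h1, h2⟩
    exact ⟨h1.symm, by tauto⟩
  loopless := by
    constructor
    rintro u ⟨h, -⟩
    exact h rfl

lemma card_filter_val_lt {n m : ℕ} (h : m ≤ n) :
    ((Finset.univ : Finset (Fin n)).filter fun v : Fin n => (v : ℕ) < m).card = m := by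
  have e : ((Finset.univ : Finset (Fin n)).filter fun v : Fin n => (v : ℕ) < m)
      = Finset.map (Fin.castLEEmb h) Finset.univ := by
    ext v
    simp only [Finset.mem_filter, Finset.mem_univ, true_and, Finset.mem_map]
    constructor
    · intro hv
      refine ⟨⟨(v : ℕ), hv⟩, ?_⟩
      ext
      simp [Fin.castLEEmb]
    · rintro ⟨a, rfl⟩
      simpa [Fin.castLEEmb] using a.isLt
  rw [e, Finset.card_map, Finset.card_univ, Fintype.card_fin]

lemma sum_ind_lt {n m : ℕ} (h : m ≤ n) :
    ∑ v : Fin n, (if (v : ℕ) < m then (1 : ℝ) else 0) = m := by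
  rw [Finset.sum_boole, card_filter_val_lt h]

open Matrix Module.End Finset in
lemma rayleigh_le_maxEigenvalue {n : ℕ} (hn : 0 < n) (M : Matrix (Fin n) (Fin n) ℝ)
    (hM : M.IsHermitian) (x : Fin n → ℝ) :
    dotProduct x (M.mulVec x) ≤
      (sSup {t : ℝ | Module.End.HasEigenvalue (Matrix.toLin' M) t}) * dotProduct x x := by
  haveI : Nonempty (Fin n) := ⟨⟨0, hn⟩⟩
  obtain ⟨i₀, -, hmax⟩ := Finset.exists_max_image Finset.univ hM.eigenvalues
    ⟨Classical.arbitrary _, Finset.mem_univ _⟩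
  set lam := hM.eigenvalues i₀ with hlam
  have hvec : M *ᵥ ⇑(hM.eigenvectorBasis i₀) = lam • ⇑(hM.eigenvectorBasis i₀) :=
    hM.mulVec_eigenvectorBasis i₀
  have hv0 : ⇑(hM.eigenvectorBasis i₀) ≠ 0 := by
    intro h
    have := hM.eigenvectorBasis.toBasis.ne_zero i₀
    rw [OrthonormalBasis.coe_toBasis] at this
    apply this
    ext j
    exact congrFun h j
  have heig : Module.End.HasEigenvalue (Matrix.toLin' M) lam :=
    Module.End.hasEigenvalue_of_hasEigenvector
      ⟨Module.End.mem_eigenspace_iff.mpr (by rw [Matrix.toLin'_apply, hvec]), hv0⟩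
  have hbdd : BddAbove {t : ℝ | Module.End.HasEigenvalue (Matrix.toLin' M) t} := by
    apply Set.Finite.bddAbove
    refine (Polynomial.finite_setOf_isRoot (minpoly.ne_zero
      (Algebra.IsIntegral.isIntegral (R := ℝ) (Matrix.toLin' M)))).subset ?_
    intro t ht
    exact Module.End.hasEigenvalue_iff_isRoot.mp ht
  have hle : lam ≤ sSup {t : ℝ | Module.End.HasEigenvalue (Matrix.toLin' M) t} :=
    le_csSup hbdd heig
  have hpsd : (lam • (1 : Matrix (Fin n) (Fin n) ℝ) - M).PosSemidef := by
    have h1 : lam • (1 : Matrix (Fin n) (Fin n) ℝ) - M =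
        (hM.eigenvectorUnitary : Matrix (Fin n) (Fin n) ℝ) *
          Matrix.diagonal (fun i => lam - hM.eigenvalues i) *
          (hM.eigenvectorUnitary : Matrix (Fin n) (Fin n) ℝ)ᴴ := by
      have hsp := hM.spectral_theorem
      rw [Unitary.conjStarAlgAut_apply, Matrix.star_eq_conjTranspose] at hsp
      have hU : (hM.eigenvectorUnitary : Matrix (Fin n) (Fin n) ℝ) *
          (hM.eigenvectorUnitary : Matrix (Fin n) (Fin n) ℝ)ᴴ = 1 :=
        Matrix.mem_unitaryGroup_iff.mp hM.eigenvectorUnitary.2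
      have hd : Matrix.diagonal (fun i => lam - hM.eigenvalues i) =
          lam • (1 : Matrix (Fin n) (Fin n) ℝ) -
            Matrix.diagonal (RCLike.ofReal ∘ hM.eigenvalues) := by
        ext i j
        by_cases h : i = j <;>
          simp [Matrix.diagonal_apply, h, Matrix.one_apply, Matrix.smul_apply]
      rw [hd, Matrix.mul_sub, Matrix.sub_mul, Matrix.mul_smul, Matrix.smul_mul,
        Matrix.mul_one, hU, ← hsp]
    rw [h1]
    exact (Matrix.PosSemidef.diagonal (fun i => sub_nonneg.mpr
      (hmax i (Finset.mem_univ i)))).mul_mul_conjTranspose_same _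
  have h2 := hpsd.dotProduct_mulVec_nonneg x
  have hstar : star x = x := by
    funext i; simp
  rw [hstar, Matrix.sub_mulVec, Matrix.smul_mulVec, Matrix.one_mulVec,
    dotProduct_sub, dotProduct_smul] at h2
  have hxx : (0:ℝ) ≤ dotProduct x x := Finset.sum_nonneg fun i _ => mul_self_nonneg _
  have := mul_le_mul_of_nonneg_right hle hxx
  simp only [smul_eq_mul] at h2
  linarith

set_option maxHeartbeats 1000000 in
theorem stmt_17 (n s k : ℕ) (hk : 2 ≤ k) (hs : 1 ≤ s) (hns : 2 * s + k ≤ n)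
    (α : ℝ) (hα0 : 0 ≤ α) (hα1 : α < 1) :
    (n : ℝ) - s - k < rhoAlpha α (cliqueJoinGraph n s k) := by
  set G := cliqueJoinGraph n s k with hG
  set M := AalphaMatrix α G with hMdef
  set m := n + 1 - s - k with hm
  have hmn : m ≤ n := by omega
  have hsm : s < m := by omega
  have hm1 : 1 ≤ m := by omega
  have hsn : s ≤ n := by omega
  have hn0 : 0 < n := by omega
  set p := n - m with hp
  have hp2 : 2 ≤ p := by omega
  have hmr : (m : ℝ) = (n : ℝ) + 1 - s - k := by
    have h1 : m + s + k = n + 1 := by omega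
    have h2 := congrArg (Nat.cast : ℕ → ℝ) h1
    push_cast at h2
    linarith
  have hpr : (p : ℝ) = (n : ℝ) - m := by
    have h1 : p + m = n := by omega
    have h2 := congrArg (Nat.cast : ℕ → ℝ) h1
    push_cast at h2
    linarith
  have h1α : (0:ℝ) < 1 - α := by linarith
  set t : ℝ := s * (1 - α) / n with ht
  have hsr1 : (1:ℝ) ≤ (s:ℝ) := by exact_mod_cast hs
  have hnr : (0:ℝ) < n := by exact_mod_cast hn0
  have ht0 : 0 < t := div_pos (mul_pos (by linarith) h1α) hnr
  set x : Fin n → ℝ := fun v => if (v : ℕ) < m then 1 else t with hx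
  have hadj : ∀ u v : Fin n, G.Adj u v ↔ (u ≠ v ∧ ((u : ℕ) < s ∨ (v : ℕ) < s ∨
      ((u : ℕ) < m ∧ (v : ℕ) < m))) := fun u v => Iff.rfl
  -- Hermitian
  have hherm : M.IsHermitian := by
    rw [hMdef, Matrix.IsHermitian]
    ext i j
    simp only [AalphaMatrix, Matrix.conjTranspose_apply, Matrix.add_apply, Matrix.smul_apply,
      Matrix.diagonal_apply, SimpleGraph.adjMatrix_apply, smul_eq_mul, star_trivial]
    by_cases h : i = j
    · subst h; rfl
    · have hcomm : G.Adj j i ↔ G.Adj i j := G.adj_comm j i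
      simp [h, Ne.symm h, hcomm]
  -- degree lower bound
  have hdeg : ∀ v : Fin n, (v : ℕ) < m → (m : ℝ) - 1 ≤ (G.degree v : ℝ) := by
    intro v hv
    have hsub : ((Finset.univ : Finset (Fin n)).filter fun w : Fin n => (w : ℕ) < m ∧ w ≠ v)
        ⊆ G.neighborFinset v := by
      intro w hw
      simp only [Finset.mem_filter, Finset.mem_univ, true_and] at hw
      rw [SimpleGraph.mem_neighborFinset]
      exact (hadj v w).mpr ⟨fun h => hw.2 h.symm, Or.inr (Or.inr ⟨hv, hw.1⟩)⟩
    have hcard : ((Finset.univ : Finset (Fin n)).filter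
        fun w : Fin n => (w : ℕ) < m ∧ w ≠ v).card = m - 1 := by
      have e : ((Finset.univ : Finset (Fin n)).filter fun w : Fin n => (w : ℕ) < m ∧ w ≠ v)
          = ((Finset.univ : Finset (Fin n)).filter fun w : Fin n => (w : ℕ) < m).erase v := by
        ext w
        simp only [Finset.mem_filter, Finset.mem_univ, true_and, Finset.mem_erase]
        tauto
      rw [e, Finset.card_erase_of_mem (by simp [hv]), card_filter_val_lt hmn]
    have hle : m - 1 ≤ G.degree v := by
      rw [← hcard]
      exact Finset.card_le_card hsub
    have h2 := (Nat.cast_le (α := ℝ)).mpr hle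
    rw [Nat.cast_sub hm1] at h2
    simpa using h2
  -- indicator sums
  have S1 : ∑ v : Fin n, (if (v : ℕ) < m then (1:ℝ) else 0) = m := sum_ind_lt hmn
  have S2 : ∑ v : Fin n, (if (v : ℕ) < s then (1:ℝ) else 0) = s := sum_ind_lt hsn
  have S3 : ∑ v : Fin n, (if (v : ℕ) < m then (0:ℝ) else 1) = p := by
    have e : ∀ v : Fin n, (if (v : ℕ) < m then (0:ℝ) else 1)
        = 1 - (if (v : ℕ) < m then (1:ℝ) else 0) := by
      intro v; split <;> ring
    rw [Finset.sum_congr rfl fun v _ => e v, Finset.sum_sub_distrib, S1]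
    simp [hpr]
  -- entries of M
  have hMapp : ∀ u v : Fin n, M u v = α * (if u = v then (G.degree u : ℝ) else 0)
      + (1 - α) * (if G.Adj u v then 1 else 0) := by
    intro u v
    simp [hMdef, AalphaMatrix, Matrix.add_apply, Matrix.smul_apply,
      Matrix.diagonal_apply, SimpleGraph.adjMatrix_apply, smul_eq_mul]
  -- lower bound on quadratic form
  have hlow : (m:ℝ) * ((m:ℝ) - 1) + (1 - α) * (2 * s * p * t)
      ≤ dotProduct x (M.mulVec x) := by
    have hq : dotProduct x (M.mulVec x)
        = ∑ u : Fin n, ∑ v : Fin n, x u * (M u v * x v) := by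
      simp only [dotProduct, Matrix.mulVec, Finset.mul_sum]
    rw [hq]
    set L : Fin n → Fin n → ℝ := fun u v =>
      α * (if u = v then ((m:ℝ) - 1) * (if (u:ℕ) < m then (1:ℝ) else 0) else 0)
      + (1 - α) * ((if (u:ℕ) < m then (1:ℝ) else 0) * (if (v:ℕ) < m then (1:ℝ) else 0)
          - (if u = v then (if (u:ℕ) < m then (1:ℝ) else 0) else 0)
          + t * ((if (u:ℕ) < s then (1:ℝ) else 0) * (if (v:ℕ) < m then (0:ℝ) else 1)
               + (if (u:ℕ) < m then (0:ℝ) else 1) * (if (v:ℕ) < s then (1:ℝ) else 0))) with hL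
    have hterm : ∀ u v : Fin n, L u v ≤ x u * (M u v * x v) := by
      intro u v
      rw [hMapp u v]
      have expand : x u * ((α * (if u = v then (G.degree u:ℝ) else 0)
            + (1 - α) * (if G.Adj u v then 1 else 0)) * x v)
          = α * ((if u = v then (G.degree u:ℝ) else 0) * (x u * x v))
            + (1 - α) * ((if G.Adj u v then (1:ℝ) else 0) * (x u * x v)) := by ring
      rw [expand, hL]
      refine add_le_add (mul_le_mul_of_nonneg_left ?_ hα0)
        (mul_le_mul_of_nonneg_left ?_ h1α.le)
      · by_cases huv : u = v
        · subst huv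
          by_cases hum : (u:ℕ) < m
          · have hd := hdeg u hum
            simp only [hx, if_pos rfl, if_pos hum, eq_self_iff_true, if_true]
            nlinarith
          · have h0 : (0:ℝ) ≤ (G.degree u : ℝ) := Nat.cast_nonneg _
            simp only [hx, if_pos rfl, if_neg hum, eq_self_iff_true, if_true]
            nlinarith [ht0]
        · simp [huv]
      · simp only [hx]
        by_cases hum : (u:ℕ) < m <;> by_cases hvm : (v:ℕ) < m
        · by_cases huv : u = v
          · subst huv
            simp only [if_pos hum, if_pos rfl, if_neg (G.irrefl (v := u)), mul_zero, zero_mul,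
              mul_one, one_mul, add_zero, zero_add, sub_zero, sub_self, ite_self, le_refl]
            try first | linarith [ht0] | nlinarith [ht0] | norm_num
          · have hadj' : G.Adj u v := (hadj u v).mpr ⟨huv, Or.inr (Or.inr ⟨hum, hvm⟩)⟩
            simp only [if_pos hum, if_pos hvm, if_neg huv, if_pos hadj', mul_zero, zero_mul,
              mul_one, one_mul, add_zero, zero_add, sub_zero, sub_self, ite_self, le_refl]
            try first | linarith [ht0] | nlinarith [ht0] | norm_num
        · have huv : u ≠ v := by
            intro h; rw [h] at hum; exact hvm hum
          by_cases hus : (u:ℕ) < s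
          · have hadj' : G.Adj u v := (hadj u v).mpr ⟨huv, Or.inl hus⟩
            simp only [if_pos hum, if_neg hvm, if_neg huv, if_pos hus, if_pos hadj', mul_zero, zero_mul,
              mul_one, one_mul, add_zero, zero_add, sub_zero, sub_self, ite_self, le_refl]
            try first | linarith [ht0] | nlinarith [ht0] | norm_num
          · by_cases hA : G.Adj u v
            · simp only [if_pos hum, if_neg hvm, if_neg huv, if_neg hus, if_pos hA, mul_zero, zero_mul,
              mul_one, one_mul, add_zero, zero_add, sub_zero, sub_self, ite_self, le_refl]
              try first | linarith [ht0] | nlinarith [ht0] | norm_num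
            · simp only [if_pos hum, if_neg hvm, if_neg huv, if_neg hus, if_neg hA, mul_zero, zero_mul,
              mul_one, one_mul, add_zero, zero_add, sub_zero, sub_self, ite_self, le_refl]
              try first | linarith [ht0] | nlinarith [ht0] | norm_num
        · have huv : u ≠ v := by
            intro h; rw [h] at hum; exact hum hvm
          by_cases hvs : (v:ℕ) < s
          · have hadj' : G.Adj u v := (hadj u v).mpr ⟨huv, Or.inr (Or.inl hvs)⟩
            simp only [if_neg hum, if_pos hvm, if_neg huv, if_pos hvs, if_pos hadj', mul_zero, zero_mul,
              mul_one, one_mul, add_zero, zero_add, sub_zero, sub_self, ite_self, le_refl]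
            try first | linarith [ht0] | nlinarith [ht0] | norm_num
          · by_cases hA : G.Adj u v
            · simp only [if_neg hum, if_pos hvm, if_neg huv, if_neg hvs, if_pos hA, mul_zero, zero_mul,
              mul_one, one_mul, add_zero, zero_add, sub_zero, sub_self, ite_self, le_refl]
              try first | linarith [ht0] | nlinarith [ht0] | norm_num
            · simp only [if_neg hum, if_pos hvm, if_neg huv, if_neg hvs, if_neg hA, mul_zero, zero_mul,
              mul_one, one_mul, add_zero, zero_add, sub_zero, sub_self, ite_self, le_refl]
              try first | linarith [ht0] | nlinarith [ht0] | norm_num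
        · have hus : ¬ (u:ℕ) < s := fun h => hum (h.trans hsm)
          have hvs : ¬ (v:ℕ) < s := fun h => hvm (h.trans hsm)
          by_cases hA : G.Adj u v
          · simp only [if_neg hum, if_neg hvm, if_neg hus, if_neg hvs, if_pos hA, mul_zero, zero_mul,
              mul_one, one_mul, add_zero, zero_add, sub_zero, sub_self, ite_self, le_refl]
            try first | linarith [ht0] | nlinarith [ht0] | norm_num
          · simp only [if_neg hum, if_neg hvm, if_neg hus, if_neg hvs, if_neg hA, mul_zero, zero_mul,
              mul_one, one_mul, add_zero, zero_add, sub_zero, sub_self, ite_self, le_refl]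
            try first | linarith [ht0] | nlinarith [ht0] | norm_num
    have hLsum : ∑ u : Fin n, ∑ v : Fin n, L u v
        = α * (((m:ℝ) - 1) * m) + (1 - α) * ((m:ℝ) * m - m
            + t * ((s:ℝ) * p + (p:ℝ) * s)) := by
      have inner : ∀ u : Fin n, ∑ v : Fin n, L u v
          = α * (((m:ℝ) - 1) * (if (u:ℕ) < m then (1:ℝ) else 0))
            + (1 - α) * ((if (u:ℕ) < m then (1:ℝ) else 0) * (m:ℝ)
                - (if (u:ℕ) < m then (1:ℝ) else 0)
                + t * ((if (u:ℕ) < s then (1:ℝ) else 0) * (p:ℝ)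
                     + (if (u:ℕ) < m then (0:ℝ) else 1) * (s:ℝ))) := by
        intro u
        simp only [hL]
        rw [Finset.sum_add_distrib]
        congr 1
        · rw [← Finset.mul_sum, Finset.sum_ite_eq]
          simp
        · rw [← Finset.mul_sum]
          congr 1
          rw [Finset.sum_add_distrib, Finset.sum_sub_distrib, ← Finset.mul_sum, S1,
            Finset.sum_ite_eq]
          simp only [Finset.mem_univ, if_true]
          congr 1
          rw [← Finset.mul_sum]
          congr 1
          rw [Finset.sum_add_distrib, ← Finset.mul_sum, ← Finset.mul_sum, S3, S2]
      rw [Finset.sum_congr rfl fun u _ => inner u]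
      simp only [Finset.sum_add_distrib, Finset.sum_sub_distrib, ← Finset.mul_sum,
        ← Finset.sum_mul, S1, S2, S3]
      try ring
    calc (m:ℝ) * ((m:ℝ) - 1) + (1 - α) * (2 * s * p * t)
        = α * (((m:ℝ) - 1) * m) + (1 - α) * ((m:ℝ) * m - m
            + t * ((s:ℝ) * p + (p:ℝ) * s)) := by ring
      _ = ∑ u : Fin n, ∑ v : Fin n, L u v := hLsum.symm
      _ ≤ ∑ u : Fin n, ∑ v : Fin n, x u * (M u v * x v) :=
          Finset.sum_le_sum fun u _ => Finset.sum_le_sum fun v _ => hterm u v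
  -- norm of x
  have hnorm : dotProduct x x = (m:ℝ) + (p:ℝ) * t ^ 2 := by
    have e : ∀ v : Fin n, x v * x v = (if (v : ℕ) < m then (1:ℝ) else 0)
        + t ^ 2 * (if (v : ℕ) < m then (0:ℝ) else 1) := by
      intro v; simp only [hx]; split <;> ring
    simp only [dotProduct]
    rw [Finset.sum_congr rfl fun v _ => e v, Finset.sum_add_distrib, S1, ← Finset.mul_sum, S3]
    ring
  have hray := rayleigh_le_maxEigenvalue hn0 M hherm x
  rw [hnorm] at hray
  set R : ℝ := sSup {t : ℝ | Module.End.HasEigenvalue (Matrix.toLin' M) t} with hR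
  have hgoal : rhoAlpha α G = R := rfl
  rw [hgoal]
  have hX : (0:ℝ) < (m:ℝ) + (p:ℝ) * t ^ 2 := by
    have h1 : (1:ℝ) ≤ (m:ℝ) := by exact_mod_cast hm1
    have h2 : (0:ℝ) ≤ (p:ℝ) := Nat.cast_nonneg _
    nlinarith [sq_nonneg t]
  have hpr2 : (2:ℝ) ≤ (p:ℝ) := by exact_mod_cast hp2
  have hkey : ((m:ℝ) - 1) * ((m:ℝ) + (p:ℝ) * t ^ 2)
      < (m:ℝ) * ((m:ℝ) - 1) + (1 - α) * (2 * s * p * t) := by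
    have hmt : ((m:ℝ) - 1) * t < 2 * s * (1 - α) := by
      have h1 : ((m:ℝ) - 1) * t ≤ (n:ℝ) * t := by
        have : (m:ℝ) ≤ n := by exact_mod_cast hmn
        nlinarith [ht0]
      have h2 : (n:ℝ) * t = s * (1 - α) := by
        rw [ht]; field_simp
      nlinarith [mul_pos (by linarith : (0:ℝ) < (s:ℝ)) h1α]
    nlinarith [mul_pos ht0 (by linarith : (0:ℝ) < (p:ℝ)), ht0]
  have hlt : ((m:ℝ) - 1) * ((m:ℝ) + (p:ℝ) * t ^ 2) < R * ((m:ℝ) + (p:ℝ) * t ^ 2) :=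
    lt_of_lt_of_le (lt_of_lt_of_le hkey hlow) hray
  have hfin : (m:ℝ) - 1 < R := lt_of_mul_lt_mul_right hlt hX.le
  linarith [hmr, hfin]
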